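/- Let H : EuclideanSpace ℝ (Fin m) → Matrix (Fin n) (Fin n) ℝ be differentiable with H(w) symmetric for every w, and suppose λ : EuclideanSpace ℝ (Fin m) → ℝ and v : EuclideanSpace ℝ (Fin m) → EuclideanSpace ℝ (Fin n) are differentiable with H(w) · v(w) = λ(w) • v(w) and ‖v(w)‖ = 1 for all w. Then for every w and every direction u ∈ EuclideanSpace ℝ (Fin m), the directional derivative of λ at w in direction u equals v(w)ᵀ · (D_u H(w)) · v(w), where D_u H(w) is the directional derivative of H at w in direction u (taken entrywise). -/

import Mathlib

open scoped RealInnerProductSpace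

/-- Directional derivative of a distinct eigenvalue of a differentiable family of
symmetric matrices parametrized by `w ∈ ℝᵐ`: for every direction `u`, the derivative
at `r = 0` of `r ↦ λ(w + r • u)` equals `v(w)ᵀ (D_u H(w)) v(w)`, where `D_u H(w)` is
the entrywise directional derivative of `H` at `w` in direction `u`. -/
theorem stmt_1 {m n : ℕ} (H : EuclideanSpace ℝ (Fin m) → Matrix (Fin n) (Fin n) ℝ)
    (hH : ∀ i j, Differentiable ℝ (fun w => H w i j))
    (hsymm : ∀ w, (H w).IsSymm)
    (lam : EuclideanSpace ℝ (Fin m) → ℝ)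
    (v : EuclideanSpace ℝ (Fin m) → EuclideanSpace ℝ (Fin n))
    (hlam : Differentiable ℝ lam) (hv : Differentiable ℝ v)
    (heig : ∀ w i, ∑ j, H w i j * v w j = lam w * v w i)
    (hunit : ∀ w, ‖v w‖ = 1) :
    ∀ (w u : EuclideanSpace ℝ (Fin m)) (H' : Matrix (Fin n) (Fin n) ℝ),
      (∀ i j, HasDerivAt (fun r : ℝ => H (w + r • u) i j) (H' i j) 0) →
      HasDerivAt (fun r : ℝ => lam (w + r • u)) (∑ i, ∑ j, v w i * H' i j * v w j) 0 := by
  intro w u H' hH'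
  -- squared norm one
  have hsq : ∀ x, ∑ i, v x i * v x i = 1 := by
    intro x
    have h1 : (inner ℝ (v x) (v x) : ℝ) = 1 := by
      rw [real_inner_self_eq_norm_sq, hunit]; norm_num
    simpa only [PiLp.inner_apply, RCLike.inner_apply, conj_trivial, mul_comm] using h1
  -- lam as quadratic form
  have hlameq : ∀ x, lam x = ∑ i, ∑ j, v x i * H x i j * v x j := by
    intro x
    have : ∀ i, ∑ j, v x i * H x i j * v x j = lam x * (v x i * v x i) := by
      intro i
      calc ∑ j, v x i * H x i j * v x j
          = v x i * ∑ j, H x i j * v x j := by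
            rw [Finset.mul_sum]; exact Finset.sum_congr rfl fun j _ => by ring
        _ = lam x * (v x i * v x i) := by rw [heig x i]; ring
    rw [Finset.sum_congr rfl fun i _ => this i, ← Finset.mul_sum, hsq, mul_one]
  -- differentiability of components
  have hcdiff : Differentiable ℝ (fun r : ℝ => w + r • u) := by
    exact differentiable_const w |>.add (differentiable_id.smul_const u)
  have hvdiff : ∀ i : Fin n, Differentiable ℝ (fun r : ℝ => v (w + r • u) i) := by
    intro i
    exact (EuclideanSpace.proj i).differentiable.comp (hv.comp hcdiff)
  set a : Fin n → ℝ := fun i => deriv (fun r : ℝ => v (w + r • u) i) 0 with ha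
  have hvd : ∀ i, HasDerivAt (fun r : ℝ => v (w + r • u) i) (a i) 0 :=
    fun i => (hvdiff i 0).hasDerivAt
  -- orthogonality
  have hS : ∑ i, a i * v w i = 0 := by
    have hd1 : HasDerivAt (fun r : ℝ => ∑ i, v (w + r • u) i * v (w + r • u) i)
        (∑ i, (a i * v (w + (0:ℝ) • u) i + v (w + (0:ℝ) • u) i * a i)) 0 :=
      HasDerivAt.fun_sum fun i _ => (hvd i).mul (hvd i)
    simp only [funext fun r : ℝ => hsq (w + r • u), zero_smul, add_zero] at hd1
    have h0 := hd1.unique (hasDerivAt_const 0 (1:ℝ))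
    have h2 : (2:ℝ) * ∑ i, a i * v w i = 0 := by
      rw [Finset.mul_sum]
      rw [← h0]
      exact Finset.sum_congr rfl fun i _ => by ring
    linarith
  -- main derivative via product rule
  have hmain : HasDerivAt
      (fun r : ℝ => ∑ i, ∑ j, v (w + r • u) i * H (w + r • u) i j * v (w + r • u) j)
      (∑ i, ∑ j, ((a i * H (w + (0:ℝ) • u) i j + v (w + (0:ℝ) • u) i * H' i j) *
          v (w + (0:ℝ) • u) j + v (w + (0:ℝ) • u) i * H (w + (0:ℝ) • u) i j * a j)) 0 :=
    HasDerivAt.fun_sum fun i _ => HasDerivAt.fun_sum fun j _ =>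
      ((hvd i).mul (hH' i j)).mul (hvd j)
  simp only [zero_smul, add_zero] at hmain
  have hfun : (fun r : ℝ => lam (w + r • u)) =
      fun r : ℝ => ∑ i, ∑ j, v (w + r • u) i * H (w + r • u) i j * v (w + r • u) j :=
    funext fun r => hlameq _
  rw [hfun]
  convert hmain using 1
  -- derivative equality
  have t1 : ∑ i, ∑ j, a i * H w i j * v w j = 0 := by
    have : ∀ i, ∑ j, a i * H w i j * v w j = lam w * (a i * v w i) := by
      intro i
      calc ∑ j, a i * H w i j * v w j
          = a i * ∑ j, H w i j * v w j := by
            rw [Finset.mul_sum]; exact Finset.sum_congr rfl fun j _ => by ring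
        _ = lam w * (a i * v w i) := by rw [heig w i]; ring
    rw [Finset.sum_congr rfl fun i _ => this i, ← Finset.mul_sum, hS, mul_zero]
  have t3 : ∑ i, ∑ j, v w i * H w i j * a j = 0 := by
    rw [Finset.sum_comm]
    have : ∀ j, ∑ i, v w i * H w i j * a j = lam w * (a j * v w j) := by
      intro j
      calc ∑ i, v w i * H w i j * a j
          = a j * ∑ i, H w j i * v w i := by
            rw [Finset.mul_sum]
            exact Finset.sum_congr rfl fun i _ => by
              rw [(hsymm w).apply i j]; ring
        _ = lam w * (a j * v w j) := by rw [heig w j]; ring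
    rw [Finset.sum_congr rfl fun j _ => this j, ← Finset.mul_sum, hS, mul_zero]
  calc ∑ i, ∑ j, v w i * H' i j * v w j
      = (∑ i, ∑ j, a i * H w i j * v w j) + (∑ i, ∑ j, v w i * H' i j * v w j)
        + (∑ i, ∑ j, v w i * H w i j * a j) := by rw [t1, t3]; ring
    _ = ∑ i, ∑ j, ((a i * H w i j + v w i * H' i j) * v w j
        + v w i * H w i j * a j) := by
        simp only [← Finset.sum_add_distrib, add_mul]
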